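/- arXiv:1907.12710 — 2 statements merged into one kernel-verified Lean document; each statement's English description precedes it below -/
import Mathlib

section
/- The quotient ring K[x1,x2,x3]/(x1^2 - x2*x3, x1*x2 - x3^2, x1*x3 - x2^2) is a Cohen–Macaulay ring of Krull dimension 1. -/
set_option maxHeartbeats 1000000
set_option synthInstance.maxHeartbeats 400000


open MvPolynomial
open scoped Pointwise

/-- The depth of `R` with respect to the ideal `J`: the supremum of lengths of
regular sequences on `R` consisting of elements of `J`. -/
noncomputable def idealDepth {R : Type*} [CommRing R] (J : Ideal R) : ℕ∞ :=
  sSup {c : ℕ∞ | ∃ rs : List R,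
    (∀ r ∈ rs, r ∈ J) ∧ RingTheory.Sequence.IsRegular R rs ∧ c = rs.length}

/-- The irrelevant (graded) maximal ideal of a quotient of a polynomial ring:
the image of the ideal generated by the variables. -/
noncomputable def quotMaxIdeal {K : Type*} [Field K] {σ : Type*} (I : Ideal (MvPolynomial σ K)) :
    Ideal (MvPolynomial σ K ⧸ I) :=
  (Ideal.span (Set.range X)).map (Ideal.Quotient.mk I)

/-- The ideal `(x1^2 - x2 x3, x1 x2 - x3^2, x1 x3 - x2^2)` of `K[x1,x2,x3]`,
with `x1 = X 0`, `x2 = X 1`, `x3 = X 2`. -/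
noncomputable def smallIdeal (K : Type*) [Field K] : Ideal (MvPolynomial (Fin 3) K) :=
  Ideal.span {X 0^2 - X 1 * X 2, X 0 * X 1 - X 2^2, X 0 * X 2 - X 1^2}


namespace Stmt0Aux
variable {K : Type*} [Field K]

noncomputable def α : Polynomial K →ₐ[K] MvPolynomial (Fin 3) K := Polynomial.aeval (X 0)

lemma g1_mem : (X 0^2 - X 1 * X 2 : MvPolynomial (Fin 3) K) ∈ smallIdeal K :=
  Ideal.subset_span (by simp)
lemma g2_mem : (X 0 * X 1 - X 2^2 : MvPolynomial (Fin 3) K) ∈ smallIdeal K :=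
  Ideal.subset_span (by simp)
lemma g3_mem : (X 0 * X 2 - X 1^2 : MvPolynomial (Fin 3) K) ∈ smallIdeal K :=
  Ideal.subset_span (by simp)

lemma α_mul_X (p : Polynomial K) : α (p * Polynomial.X) = α p * X 0 := by
  simp [α]

lemma finmk0 : ∀ h, (⟨0, h⟩ : Fin 3) = 0 := fun _ => rfl
lemma finmk1 : ∀ h, (⟨1, h⟩ : Fin 3) = 1 := fun _ => rfl
lemma finmk2 : ∀ h, (⟨2, h⟩ : Fin 3) = 2 := fun _ => rfl

lemma nf (f : MvPolynomial (Fin 3) K) : ∃ p q r : Polynomial K,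
    f - (α p + α q * X 1 + α r * X 2) ∈ smallIdeal K := by
  induction f using MvPolynomial.induction_on with
  | C a => exact ⟨Polynomial.C a, 0, 0, by simp [α]⟩
  | add f g hf hg =>
    obtain ⟨p, q, r, hf⟩ := hf
    obtain ⟨p', q', r', hg⟩ := hg
    refine ⟨p + p', q + q', r + r', ?_⟩
    have := Ideal.add_mem _ hf hg
    convert this using 1
    simp only [map_add]
    ring
  | mul_X f n hf =>
    obtain ⟨p, q, r, h⟩ := hf
    fin_cases n
    · refine ⟨p * Polynomial.X, q * Polynomial.X, r * Polynomial.X, ?_⟩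
      have := Ideal.mul_mem_right (X 0) _ h
      convert this using 1
      simp only [finmk0, finmk1, finmk2, α_mul_X]
      ring
    · refine ⟨r * Polynomial.X^2, p, q * Polynomial.X, ?_⟩
      have h1 := Ideal.mul_mem_right (X 1) _ h
      have h2 := Ideal.mul_mem_left _ (α q) g3_mem
      have h3 := Ideal.mul_mem_left _ (α r) g1_mem
      have := Ideal.sub_mem _ (Ideal.sub_mem _ h1 h2) h3
      convert this using 1
      simp only [finmk0, finmk1, finmk2, map_mul, map_pow, α, Polynomial.aeval_X]
      ring
    · refine ⟨q * Polynomial.X^2, r * Polynomial.X, p, ?_⟩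
      have h1 := Ideal.mul_mem_right (X 2) _ h
      have h2 := Ideal.mul_mem_left _ (α q) g1_mem
      have h3 := Ideal.mul_mem_left _ (α r) g2_mem
      have := Ideal.sub_mem _ (Ideal.sub_mem _ h1 h2) h3
      convert this using 1
      simp only [finmk0, finmk1, finmk2, map_mul, map_pow, α, Polynomial.aeval_X]
      ring


/-- the model ring: `K[t][ZMod 3]`. -/
abbrev Cring (K : Type*) [Field K] := AddMonoidAlgebra (Polynomial K) (ZMod 3)

noncomputable def φ : MvPolynomial (Fin 3) K →ₐ[K] Cring K :=
  MvPolynomial.aeval ![AddMonoidAlgebra.single 0 Polynomial.X,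
    AddMonoidAlgebra.single 1 Polynomial.X, AddMonoidAlgebra.single 2 Polynomial.X]

lemma φ_kills : ∀ x ∈ smallIdeal K, φ x = 0 := by
  have hle : smallIdeal K ≤ RingHom.ker (φ (K := K)).toRingHom := by
    rw [smallIdeal, Ideal.span_le]
    rintro y (rfl | rfl | rfl) <;>
      simp [φ, sq, AddMonoidAlgebra.single_mul_single,
        show ((0:ZMod 3)+0) = 0 by decide, show ((1:ZMod 3)+2) = 0 by decide,
        show ((0:ZMod 3)+1) = 1 by decide, show ((2:ZMod 3)+2) = 1 by decide,
        show ((0:ZMod 3)+2) = 2 by decide, show ((1:ZMod 3)+1) = 2 by decide]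
  intro x hx
  exact hle hx

lemma φ_α (p : Polynomial K) : φ (α p) = AddMonoidAlgebra.single 0 p := by
  rw [α, ← Polynomial.aeval_algHom_apply]
  have h0 : φ (X 0 : MvPolynomial (Fin 3) K) = AddMonoidAlgebra.single 0 Polynomial.X := by
    simp [φ]
  rw [h0]
  have := Polynomial.aeval_algHom_apply (AddMonoidAlgebra.singleZeroAlgHom (R := K) (A := Polynomial K)
      (M := ZMod 3)) Polynomial.X p
  simp only [AddMonoidAlgebra.singleZeroAlgHom_apply] at this
  rw [this, Polynomial.aeval_X_left_apply]

lemma inj {p q r : Polynomial K}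
    (h : α p + α q * X 1 + α r * X 2 ∈ smallIdeal K) : p = 0 ∧ q = 0 ∧ r = 0 := by
  have h0 := φ_kills _ h
  have hX1 : φ (X 1 : MvPolynomial (Fin 3) K) = AddMonoidAlgebra.single 1 Polynomial.X := by
    simp [φ]
  have hX2 : φ (X 2 : MvPolynomial (Fin 3) K) = AddMonoidAlgebra.single 2 Polynomial.X := by
    simp [φ]
  rw [map_add, map_add, map_mul, map_mul, hX1, hX2, φ_α, φ_α, φ_α,
    AddMonoidAlgebra.single_mul_single, AddMonoidAlgebra.single_mul_single,
    show ((0:ZMod 3)+1) = 1 by decide, show ((0:ZMod 3)+2) = 2 by decide] at h0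
  have h0' : (Finsupp.single (0 : ZMod 3) p + Finsupp.single 1 (q * Polynomial.X)
      + Finsupp.single 2 (r * Polynomial.X) : ZMod 3 →₀ Polynomial K) = 0 := congrArg AddMonoidAlgebra.coeff h0
  have e0 := DFunLike.congr_fun h0' (0 : ZMod 3)
  have e1 := DFunLike.congr_fun h0' (1 : ZMod 3)
  have e2 := DFunLike.congr_fun h0' (2 : ZMod 3)
  simp only [Finsupp.add_apply, Finsupp.single_apply, Finsupp.coe_zero, Pi.zero_apply,
    show ((0:ZMod 3) = 1) = False from eq_false (by decide),
    show ((0:ZMod 3) = 2) = False from eq_false (by decide),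
    show ((1:ZMod 3) = 0) = False from eq_false (by decide),
    show ((1:ZMod 3) = 2) = False from eq_false (by decide),
    show ((2:ZMod 3) = 0) = False from eq_false (by decide),
    show ((2:ZMod 3) = 1) = False from eq_false (by decide),
    if_true, if_false, add_zero, zero_add] at e0 e1 e2
  refine ⟨e0, ?_, ?_⟩
  · have := mul_eq_zero.mp e1
    simpa [Polynomial.X_ne_zero] using this
  · have := mul_eq_zero.mp e2
    simpa [Polynomial.X_ne_zero] using this


/-! ### evaluation maps and primes -/

noncomputable def ψ0 : MvPolynomial (Fin 3) K →ₐ[K] K := MvPolynomial.aeval 0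

noncomputable def ψ1 : MvPolynomial (Fin 3) K →ₐ[K] Polynomial K :=
  MvPolynomial.aeval ![Polynomial.X, Polynomial.X, Polynomial.X]

lemma small_le_ker0 : smallIdeal K ≤ RingHom.ker (ψ0 (K := K)).toRingHom := by
  rw [smallIdeal, Ideal.span_le]
  rintro y (rfl | rfl | rfl) <;> simp [ψ0]

lemma small_le_ker1 : smallIdeal K ≤ RingHom.ker (ψ1 (K := K)).toRingHom := by
  rw [smallIdeal, Ideal.span_le]
  rintro y (rfl | rfl | rfl) <;>
    simp [ψ1, Matrix.cons_val_zero, Matrix.cons_val_one, Matrix.head_cons, sq]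

lemma ker1_le_ker0 :
    RingHom.ker (ψ1 (K := K)).toRingHom ≤ RingHom.ker (ψ0 (K := K)).toRingHom := by
  have hcomp : (ψ0 (K := K)) = (Polynomial.aeval (0 : K)).comp ψ1 := by
    apply MvPolynomial.algHom_ext
    intro i
    fin_cases i <;> simp [ψ0, ψ1]
  intro f hf
  rw [RingHom.mem_ker] at hf ⊢
  rw [hcomp]
  simp only [AlgHom.toRingHom_eq_coe, RingHom.coe_coe, AlgHom.coe_comp, Function.comp_apply]
  simp only [AlgHom.toRingHom_eq_coe, RingHom.coe_coe] at hf
  rw [hf]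
  simp

lemma small_ne_top : smallIdeal K ≠ ⊤ := by
  intro h
  have : (1 : MvPolynomial (Fin 3) K) ∈ RingHom.ker (ψ0 (K := K)).toRingHom :=
    small_le_ker0 (h ▸ Submodule.mem_top)
  simp [RingHom.mem_ker] at this

instance : Nontrivial (MvPolynomial (Fin 3) K ⧸ smallIdeal K) :=
  Ideal.Quotient.nontrivial_iff.mpr small_ne_top

end Stmt0Aux

namespace Stmt0Aux
variable {K : Type*} [Field K]

local notation "R'" => MvPolynomial (Fin 3) K ⧸ smallIdeal K
local notation "mkq" => Ideal.Quotient.mk (smallIdeal K)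

/-- the two primes of the quotient giving the chain of length 1 -/
noncomputable def Q1 : Ideal R' := (RingHom.ker (ψ1 (K := K)).toRingHom).map mkq
noncomputable def Q2 : Ideal R' := (RingHom.ker (ψ0 (K := K)).toRingHom).map mkq

lemma Q1_prime : (Q1 (K := K)).IsPrime := by
  haveI := RingHom.ker_isPrime (ψ1 (K := K)).toRingHom
  exact Ideal.map_isPrime_of_surjective Ideal.Quotient.mk_surjective
    (by rw [Ideal.mk_ker]; exact small_le_ker1)

lemma Q2_prime : (Q2 (K := K)).IsPrime := by
  haveI := RingHom.ker_isPrime (ψ0 (K := K)).toRingHom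
  exact Ideal.map_isPrime_of_surjective Ideal.Quotient.mk_surjective
    (by rw [Ideal.mk_ker]; exact small_le_ker0)

lemma X0_mem_Q2 : mkq (X 0) ∈ Q2 (K := K) :=
  Ideal.mem_map_of_mem _ (by simp [RingHom.mem_ker, ψ0])

lemma X0_not_mem_Q1 : mkq (X 0) ∉ Q1 (K := K) := by
  intro h
  have h2 : (X 0 : MvPolynomial (Fin 3) K) ∈
      Ideal.comap mkq ((RingHom.ker (ψ1 (K := K)).toRingHom).map mkq) := h
  rw [Ideal.comap_map_of_surjective _ Ideal.Quotient.mk_surjective] at h2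
  have hker : Ideal.comap mkq (⊥ : Ideal R') = smallIdeal K := by
    simpa [RingHom.ker] using (Ideal.mk_ker (I := smallIdeal K))
  rw [hker, sup_eq_left.mpr small_le_ker1] at h2
  rw [RingHom.mem_ker] at h2
  simp only [AlgHom.toRingHom_eq_coe, RingHom.coe_coe, ψ1] at h2
  simp [Polynomial.X_ne_zero] at h2

lemma Q1_lt_Q2 : Q1 (K := K) < Q2 (K := K) := by
  constructor
  · exact Ideal.map_mono ker1_le_ker0
  · intro hle
    exact X0_not_mem_Q1 (hle X0_mem_Q2)

lemma dim_ge : 1 ≤ ringKrullDim R' := by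
  let q1 : PrimeSpectrum R' := ⟨Q1, Q1_prime⟩
  let q2 : PrimeSpectrum R' := ⟨Q2, Q2_prime⟩
  have hq : q1 < q2 := by
    rw [← PrimeSpectrum.asIdeal_lt_asIdeal]
    exact Q1_lt_Q2
  let ch : LTSeries (PrimeSpectrum R') := (RelSeries.singleton _ q1).snoc q2 hq
  have := Order.LTSeries.length_le_krullDim ch
  have hl : ch.length = 1 := rfl
  simpa [hl, ringKrullDim] using this

end Stmt0Aux

namespace Stmt0Aux
variable {K : Type*} [Field K]

local notation "R'" => MvPolynomial (Fin 3) K ⧸ smallIdeal K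
local notation "mkq" => Ideal.Quotient.mk (smallIdeal K)

/-- The structural map `K[t] → R'`, sending `t` to the class of `X 0`. -/
noncomputable def β : Polynomial K →ₐ[K] R' :=
  (Ideal.Quotient.mkₐ K (smallIdeal K)).comp α

noncomputable instance : Algebra (Polynomial K) R' := (β (K := K)).toRingHom.toAlgebra

lemma algebraMap_eq (p : Polynomial K) : algebraMap (Polynomial K) R' p = mkq (α p) := rfl

instance : IsScalarTower K (Polynomial K) R' :=
  IsScalarTower.of_algebraMap_eq' (β (K := K)).comp_algebraMap.symm

lemma nf' (y : R') : ∃ p q r : Polynomial K,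
    y = algebraMap (Polynomial K) R' p + algebraMap (Polynomial K) R' q * mkq (X 1)
      + algebraMap (Polynomial K) R' r * mkq (X 2) := by
  obtain ⟨f, rfl⟩ := Ideal.Quotient.mk_surjective y
  obtain ⟨p, q, r, h⟩ := nf f
  refine ⟨p, q, r, ?_⟩
  rw [algebraMap_eq, algebraMap_eq, algebraMap_eq, ← map_mul, ← map_mul, ← map_add, ← map_add]
  exact (Ideal.Quotient.mk_eq_mk_iff_sub_mem _ _).mpr h

lemma algebraMap_eq_zero_iff {p : Polynomial K} :
    algebraMap (Polynomial K) R' p = 0 ↔ p = 0 := by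
  constructor
  · intro h
    rw [algebraMap_eq, Ideal.Quotient.eq_zero_iff_mem] at h
    have h2 : α p + α (0 : Polynomial K) * X 1 + α (0 : Polynomial K) * X 2 ∈ smallIdeal K := by
      simpa using h
    exact (inj h2).1
  · rintro rfl; simp

lemma X1_cube : (mkq (X 1))^3 = algebraMap (Polynomial K) R' (Polynomial.X^3) := by
  rw [algebraMap_eq, ← map_pow]
  have hα : α (Polynomial.X ^ 3 : Polynomial K) = (X 0 : MvPolynomial (Fin 3) K)^3 := by
    simp [α]
  rw [hα]
  rw [Ideal.Quotient.mk_eq_mk_iff_sub_mem]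
  have h2 := Ideal.mul_mem_left _ (-(X 1)) (g3_mem (K := K))
  have h3 := Ideal.mul_mem_left _ (-(X 0)) (g1_mem (K := K))
  have := Ideal.add_mem _ h2 h3
  convert this using 1
  ring

lemma X2_cube : (mkq (X 2))^3 = algebraMap (Polynomial K) R' (Polynomial.X^3) := by
  rw [algebraMap_eq, ← map_pow]
  have hα : α (Polynomial.X ^ 3 : Polynomial K) = (X 0 : MvPolynomial (Fin 3) K)^3 := by
    simp [α]
  rw [hα]
  rw [Ideal.Quotient.mk_eq_mk_iff_sub_mem]
  have h2 := Ideal.mul_mem_left _ (-(X 2)) (g2_mem (K := K))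
  have h3 := Ideal.mul_mem_left _ (-(X 0)) (g1_mem (K := K))
  have := Ideal.add_mem _ h2 h3
  convert this using 1
  ring

lemma isInt (y : R') : IsIntegral (Polynomial K) y := by
  obtain ⟨p, q, r, rfl⟩ := nf' y
  have h1 : IsIntegral (Polynomial K) (mkq (X 1)) := by
    refine ⟨Polynomial.X^3 - Polynomial.C (Polynomial.X^3 : Polynomial K),
      Polynomial.monic_X_pow_sub_C _ (by norm_num), ?_⟩
    have : Polynomial.eval₂ (algebraMap (Polynomial K) R') (mkq (X 1))
        (Polynomial.X^3 - Polynomial.C (Polynomial.X^3 : Polynomial K))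
        = (mkq (X 1))^3 - algebraMap (Polynomial K) R' (Polynomial.X^3) := by
      simp
    rw [this, X1_cube, sub_self]
  have h2 : IsIntegral (Polynomial K) (mkq (X 2)) := by
    refine ⟨Polynomial.X^3 - Polynomial.C (Polynomial.X^3 : Polynomial K),
      Polynomial.monic_X_pow_sub_C _ (by norm_num), ?_⟩
    have : Polynomial.eval₂ (algebraMap (Polynomial K) R') (mkq (X 2))
        (Polynomial.X^3 - Polynomial.C (Polynomial.X^3 : Polynomial K))
        = (mkq (X 2))^3 - algebraMap (Polynomial K) R' (Polynomial.X^3) := by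
      simp
    rw [this, X2_cube, sub_self]
  exact ((isIntegral_algebraMap).add ((isIntegral_algebraMap).mul h1)).add
    ((isIntegral_algebraMap).mul h2)

lemma dim_le : ringKrullDim R' ≤ 1 := by
  have key : ∀ ch : LTSeries (PrimeSpectrum R'), ch.length ≤ 1 := by
    intro ch
    by_contra hlen
    push_neg at hlen
    have h2 : 2 ≤ ch.length := hlen
    have h01 : ch.toFun ⟨0, by omega⟩ < ch.toFun ⟨1, by omega⟩ := ch.strictMono (by
      show (⟨0, by omega⟩ : Fin (ch.length + 1)) < ⟨1, by omega⟩
      rw [Fin.mk_lt_mk]; omega)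
    have h12 : ch.toFun ⟨1, by omega⟩ < ch.toFun ⟨2, by omega⟩ := ch.strictMono (by
      show (⟨1, by omega⟩ : Fin (ch.length + 1)) < ⟨2, by omega⟩
      rw [Fin.mk_lt_mk]; omega)
    set q0 := ch.toFun ⟨0, by omega⟩
    set q1 := ch.toFun ⟨1, by omega⟩
    set q2 := ch.toFun ⟨2, by omega⟩
    rw [← PrimeSpectrum.asIdeal_lt_asIdeal] at h01 h12
    haveI := q0.isPrime
    haveI := q1.isPrime
    haveI := q2.isPrime
    obtain ⟨x, hx1, hx0⟩ := SetLike.exists_of_lt h01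
    obtain ⟨y, hy2, hy1⟩ := SetLike.exists_of_lt h12
    have p01 : Ideal.comap (algebraMap (Polynomial K) R') q0.asIdeal <
        Ideal.comap (algebraMap (Polynomial K) R') q1.asIdeal :=
      Ideal.comap_lt_comap_of_integral_mem_sdiff (le_of_lt h01) ⟨hx1, hx0⟩ (isInt x)
    have p12 : Ideal.comap (algebraMap (Polynomial K) R') q1.asIdeal <
        Ideal.comap (algebraMap (Polynomial K) R') q2.asIdeal :=
      Ideal.comap_lt_comap_of_integral_mem_sdiff (le_of_lt h12) ⟨hy2, hy1⟩ (isInt y)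
    have hp1ne : Ideal.comap (algebraMap (Polynomial K) R') q1.asIdeal ≠ ⊥ := by
      intro h
      rw [h] at p01
      exact (not_lt_bot p01)
    haveI : (Ideal.comap (algebraMap (Polynomial K) R') q1.asIdeal).IsPrime :=
      Ideal.IsPrime.comap _
    have hmax : (Ideal.comap (algebraMap (Polynomial K) R') q1.asIdeal).IsMaximal :=
      Ideal.IsPrime.isMaximal inferInstance hp1ne
    haveI : (Ideal.comap (algebraMap (Polynomial K) R') q2.asIdeal).IsPrime :=
      Ideal.IsPrime.comap _
    exact (Ideal.IsPrime.ne_top inferInstance) (hmax.1.2 _ p12)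
  rw [ringKrullDim, Order.krullDim]
  apply iSup_le
  intro ch
  have := key ch
  exact_mod_cast (by exact_mod_cast Nat.cast_le.mpr this : ((ch.length : ℕ∞) : WithBot ℕ∞) ≤ ((1:ℕ∞) : WithBot ℕ∞))

end Stmt0Aux

namespace Stmt0Aux
variable {K : Type*} [Field K]

local notation "R'" => MvPolynomial (Fin 3) K ⧸ smallIdeal K
local notation "mkq" => Ideal.Quotient.mk (smallIdeal K)

lemma X0_regular : IsSMulRegular R' (mkq (X 0)) := by
  intro u v huv
  obtain ⟨f, rfl⟩ := Ideal.Quotient.mk_surjective u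
  obtain ⟨g, rfl⟩ := Ideal.Quotient.mk_surjective v
  simp only [smul_eq_mul] at huv
  rw [← map_mul, ← map_mul, Ideal.Quotient.mk_eq_mk_iff_sub_mem] at huv
  have h : X 0 * (f - g) ∈ smallIdeal K := by
    convert huv using 1; ring
  rw [Ideal.Quotient.mk_eq_mk_iff_sub_mem]
  obtain ⟨p, q, r, hnf⟩ := nf (f - g)
  have h2 : X 0 * ((f - g) - (α p + α q * X 1 + α r * X 2)) ∈ smallIdeal K :=
    Ideal.mul_mem_left _ _ hnf
  have h3 : α (p * Polynomial.X) + α (q * Polynomial.X) * X 1 + α (r * Polynomial.X) * X 2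
      ∈ smallIdeal K := by
    have := Ideal.sub_mem _ h h2
    convert this using 1
    simp only [α_mul_X]
    ring
  obtain ⟨hp, hq, hr⟩ := inj h3
  rw [mul_eq_zero] at hp hq hr
  have hp0 : p = 0 := hp.resolve_right Polynomial.X_ne_zero
  have hq0 : q = 0 := hq.resolve_right Polynomial.X_ne_zero
  have hr0 : r = 0 := hr.resolve_right Polynomial.X_ne_zero
  rw [hp0, hq0, hr0] at hnf
  simpa using hnf

lemma exists_c (a : R') (ha : IsSMulRegular R' a) :
    ∃ c : Polynomial K, c.Monic ∧ ∃ s : R', algebraMap (Polynomial K) R' c = a * s := by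
  obtain ⟨P, hP, hPa⟩ := isInt a
  have hPa' : Polynomial.aeval a P = 0 := hPa
  clear hPa
  have key : ∀ n : ℕ, ∀ P : Polynomial (Polynomial K), P.Monic → P.natDegree = n →
      Polynomial.aeval a P = 0 →
      ∃ c : Polynomial K, c.Monic ∧ ∃ s : R', algebraMap (Polynomial K) R' c = a * s := by
    intro n
    induction n using Nat.strong_induction_on with
    | _ n ih =>
      intro P hP hdeg hval
      rcases Nat.eq_zero_or_pos n with h0 | hpos
      · rw [h0] at hdeg
        rw [hP.natDegree_eq_zero.mp hdeg] at hval
        simp at hval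
      · have heq : Polynomial.aeval a P.divX * a
            + algebraMap (Polynomial K) R' (P.coeff 0) = 0 := by
          have := Polynomial.divX_mul_X_add P
          calc Polynomial.aeval a P.divX * a + algebraMap (Polynomial K) R' (P.coeff 0)
              = Polynomial.aeval a (P.divX * Polynomial.X + Polynomial.C (P.coeff 0)) := by
                simp
            _ = Polynomial.aeval a P := by rw [this]
            _ = 0 := hval
        by_cases hc : P.coeff 0 = 0
        · have hz : a * Polynomial.aeval a P.divX = 0 := by
            rw [hc] at heq; rw [mul_comm]; simpa using heq
          have hdx : Polynomial.aeval a P.divX = 0 := by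
            apply ha
            simp only [smul_eq_mul, mul_zero]
            exact hz
          have hmon : P.divX.Monic := by
            have hd : P.divX.natDegree = n - 1 := by
              rw [Polynomial.natDegree_divX_eq_natDegree_tsub_one, hdeg]
            rw [Polynomial.Monic, Polynomial.leadingCoeff, hd, Polynomial.coeff_divX]
            have h1 : n - 1 + 1 = n := by omega
            rw [h1, ← hdeg]
            exact hP
          exact ih (n - 1) (by omega) P.divX hmon
            (by rw [Polynomial.natDegree_divX_eq_natDegree_tsub_one, hdeg]) hdx
        · refine ⟨P.coeff 0 * Polynomial.C (P.coeff 0).leadingCoeff⁻¹,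
            Polynomial.monic_mul_leadingCoeff_inv hc, ?_⟩
          refine ⟨(-(Polynomial.aeval a P.divX)) *
            algebraMap (Polynomial K) R' (Polynomial.C (P.coeff 0).leadingCoeff⁻¹), ?_⟩
          rw [map_mul]
          have hc0 : algebraMap (Polynomial K) R' (P.coeff 0)
              = a * (-(Polynomial.aeval a P.divX)) := by
            have := heq
            rw [← eq_neg_iff_add_eq_zero] at this  -- maybe wrong lemma direction
            ring_nf
            ring_nf at this
            linear_combination this
          rw [hc0]
          ring
  exact key P.natDegree P hP rfl hPa'

end Stmt0Aux

namespace Stmt0Aux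
variable {K : Type*} [Field K]

local notation "R'" => MvPolynomial (Fin 3) K ⧸ smallIdeal K
local notation "mkq" => Ideal.Quotient.mk (smallIdeal K)

lemma c_smul_zero (a : R') {c : Polynomial K} {s : R'}
    (hcs : algebraMap (Polynomial K) R' c = a * s)
    (w : QuotSMulTop a R') : c • w = 0 := by
  obtain ⟨w0, rfl⟩ := Submodule.Quotient.mk_surjective _ w
  rw [← Submodule.Quotient.mk_smul, Submodule.Quotient.mk_eq_zero]
  have h : c • w0 = a • (s * w0) := by
    rw [Algebra.smul_def, hcs, smul_eq_mul]; ring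
  rw [h]
  exact Submodule.smul_mem_pointwise_smul _ _ _ Submodule.mem_top

lemma smul_mem_span (a : R') {c : Polynomial K} (hc : c.Monic)
    (hkill : ∀ w : QuotSMulTop a R', c • w = 0)
    (w : QuotSMulTop a R') (p : Polynomial K) :
    p • w ∈ Submodule.span K
      ((fun j : ℕ => (Polynomial.X^j : Polynomial K) • w) '' Set.Iio c.natDegree) := by
  have hsplit : p • w = (p %ₘ c) • w := by
    conv_lhs => rw [← Polynomial.modByMonic_add_div p c]
    rw [add_smul, mul_smul, hkill, add_zero]
  rw [hsplit]
  set v := p %ₘ c with hv_def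
  by_cases hv : v = 0
  · rw [hv, zero_smul]; exact Submodule.zero_mem _
  · have hdeg : v.natDegree < c.natDegree :=
      Polynomial.natDegree_lt_natDegree hv (Polynomial.degree_modByMonic_lt p hc)
    have hsum := Polynomial.as_sum_range' v c.natDegree hdeg
    rw [show v • w = (∑ i ∈ Finset.range c.natDegree,
      (Polynomial.monomial i) (v.coeff i)) • w from by rw [← hsum], Finset.sum_smul]
    apply Submodule.sum_mem
    intro i hi
    have h1 : (Polynomial.monomial i (v.coeff i) : Polynomial K) • w
        = (v.coeff i) • ((Polynomial.X^i : Polynomial K) • w) := by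
      rw [← Polynomial.C_mul_X_pow_eq_monomial, mul_smul, ← algebraMap_smul (Polynomial K)
        (v.coeff i), Polynomial.algebraMap_eq]
    rw [h1]
    refine Submodule.smul_mem _ _ (Submodule.subset_span ⟨i, ?_, rfl⟩)
    simpa using Finset.mem_range.mp hi

lemma findim (a : R') (ha : IsSMulRegular R' a) :
    FiniteDimensional K (QuotSMulTop a R') := by
  obtain ⟨c, hc, s, hcs⟩ := exists_c a ha
  have hkill : ∀ w : QuotSMulTop a R', c • w = 0 := c_smul_zero a hcs
  set w1 : QuotSMulTop a R' := Submodule.Quotient.mk 1 with hw1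
  set w2 : QuotSMulTop a R' := Submodule.Quotient.mk (mkq (X 1)) with hw2
  set w3 : QuotSMulTop a R' := Submodule.Quotient.mk (mkq (X 2)) with hw3
  let A1 := (fun j : ℕ => (Polynomial.X^j : Polynomial K) • w1) '' Set.Iio c.natDegree
  let A2 := (fun j : ℕ => (Polynomial.X^j : Polynomial K) • w2) '' Set.Iio c.natDegree
  let A3 := (fun j : ℕ => (Polynomial.X^j : Polynomial K) • w3) '' Set.Iio c.natDegree
  have hfin : (A1 ∪ A2 ∪ A3).Finite :=
    (((Set.finite_Iio _).image _).union ((Set.finite_Iio _).image _)).union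
      ((Set.finite_Iio _).image _)
  have hspan : Submodule.span K (A1 ∪ A2 ∪ A3) = ⊤ := by
    rw [Submodule.eq_top_iff']
    intro x
    obtain ⟨y, rfl⟩ := Submodule.Quotient.mk_surjective _ x
    obtain ⟨p, q, r, rfl⟩ := nf' y
    have hy : algebraMap (Polynomial K) R' p + algebraMap (Polynomial K) R' q * mkq (X 1)
        + algebraMap (Polynomial K) R' r * mkq (X 2)
        = p • (1 : R') + q • (mkq (X 1)) + r • (mkq (X 2)) := by
      simp [Algebra.smul_def]
    rw [hy]
    rw [show (Submodule.Quotient.mk (p • (1 : R') + q • (mkq (X 1)) + r • (mkq (X 2)))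
        : QuotSMulTop a R') = p • w1 + q • w2 + r • w3 by
      rw [hw1, hw2, hw3, ← Submodule.Quotient.mk_smul, ← Submodule.Quotient.mk_smul,
        ← Submodule.Quotient.mk_smul, ← Submodule.Quotient.mk_add, ← Submodule.Quotient.mk_add]]
    refine Submodule.add_mem _ (Submodule.add_mem _ ?_ ?_) ?_
    · exact Submodule.span_mono (by intro z hz; exact Or.inl (Or.inl hz))
        (smul_mem_span a hc hkill w1 p)
    · exact Submodule.span_mono (by intro z hz; exact Or.inl (Or.inr hz))
        (smul_mem_span a hc hkill w2 q)
    · exact Submodule.span_mono (by intro z hz; exact Or.inr hz)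
        (smul_mem_span a hc hkill w3 r)
  exact ⟨Submodule.fg_def.mpr ⟨A1 ∪ A2 ∪ A3, hfin, hspan⟩⟩

end Stmt0Aux

namespace Stmt0Aux
variable {K : Type*} [Field K]

local notation "R'" => MvPolynomial (Fin 3) K ⧸ smallIdeal K
local notation "mkq" => Ideal.Quotient.mk (smallIdeal K)

lemma no_two_regular (rs : List R') (h : RingTheory.Sequence.IsRegular R' rs) :
    rs.length ≤ 1 := by
  match rs with
  | [] => simp
  | [a] => simp
  | a :: b :: t =>
    exfalso
    rw [RingTheory.Sequence.isRegular_cons_iff] at h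
    obtain ⟨ha, h2⟩ := h
    have hb : IsSMulRegular (QuotSMulTop a R') b := by
      have hw := h2.toIsWeaklyRegular
      rw [RingTheory.Sequence.isWeaklyRegular_cons_iff] at hw
      exact hw.1
    haveI := findim a ha
    have hinj : Function.Injective
        ((LinearMap.lsmul R' (QuotSMulTop a R') b).restrictScalars K) := fun x y hxy => hb hxy
    have hsurj := (LinearMap.injective_iff_surjective).mp hinj
    apply h2.top_ne_smul
    have hle : (⊤ : Submodule R' (QuotSMulTop a R')) ≤ Ideal.ofList (b :: t) • ⊤ := by
      intro w _
      obtain ⟨y, hy⟩ := hsurj w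
      rw [Ideal.ofList_cons_smul]
      apply Submodule.mem_sup_left
      rw [← hy]
      exact Submodule.smul_mem_pointwise_smul _ _ _ Submodule.mem_top
    exact (top_le_iff.mp hle).symm

lemma X0_mem_max : mkq (X 0) ∈ quotMaxIdeal (smallIdeal K) :=
  Ideal.mem_map_of_mem _ (Ideal.subset_span ⟨0, rfl⟩)

lemma X0_isRegular_seq : RingTheory.Sequence.IsRegular R' [mkq (X 0)] := by
  refine ⟨(RingTheory.Sequence.isWeaklyRegular_cons_iff _ _ _).mpr
    ⟨X0_regular, RingTheory.Sequence.IsWeaklyRegular.nil _ _⟩, ?_⟩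
  intro htop
  have h1 : (1 : R') ∈ (mkq (X 0)) • (⊤ : Submodule R' R') := by
    rw [Ideal.ofList_singleton, Submodule.ideal_span_singleton_smul] at htop
    exact htop ▸ Submodule.mem_top
  rw [← SetLike.mem_coe, Submodule.coe_pointwise_smul] at h1
  obtain ⟨y, -, hy⟩ := h1
  have hyQ : (1 : R') ∈ Q2 (K := K) := by
    rw [← hy]
    simp only [smul_eq_mul]
    exact Ideal.mul_mem_right _ _ X0_mem_Q2
  exact Q2_prime.ne_top ((Ideal.eq_top_iff_one _).mpr hyQ)

lemma depth_eq : idealDepth (quotMaxIdeal (smallIdeal K)) = 1 := by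
  apply le_antisymm
  · apply sSup_le
    rintro c ⟨rs, -, hreg, rfl⟩
    have h := no_two_regular rs hreg
    exact_mod_cast Nat.cast_le.mpr h
  · apply le_sSup
    refine ⟨[mkq (X 0)], ?_, X0_isRegular_seq, by simp⟩
    intro r hr
    rw [List.mem_singleton] at hr
    subst hr
    exact X0_mem_max

end Stmt0Aux


/-- `K[x1,x2,x3]/(x1^2 - x2 x3, x1 x2 - x3^2, x1 x3 - x2^2)` is a
Cohen–Macaulay ring of Krull dimension 1. -/
theorem stmt0 (K : Type*) [Field K] :
    idealDepth (quotMaxIdeal (smallIdeal K)) = 1 ∧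
    ringKrullDim (MvPolynomial (Fin 3) K ⧸ smallIdeal K) = 1 :=
  ⟨Stmt0Aux.depth_eq, le_antisymm Stmt0Aux.dim_le Stmt0Aux.dim_ge⟩
end

section
/- In S = K[x1,...,x_{3d}] with the monomial order <_r (weight vector with r blocks (1,2,2) followed by d−r blocks (1,1,1), ties broken lexicographically with x_{3d} < ... < x_1), the initial ideal of I equals the monomial ideal generated by x_{3i-1}x_{3i}, x_{3i-1}^2, x_{3i}^2 for 1 ≤ i ≤ r together with x_{3i-2}^2, x_{3i-2}x_{3i-1}, x_{3i-2}x_{3i}, x_{3i-1}^3 for r+1 ≤ i ≤ d. -/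
open MvPolynomial

/-- Lexicographic comparison of exponent vectors, the variable of smallest index
being the most significant (i.e. `x_n < ... < x_1`). -/
def lexLt {n : ℕ} (a b : Fin n →₀ ℕ) : Prop :=
  ∃ i, a i < b i ∧ ∀ j, j < i → a j = b j

/-- The weight of an exponent vector with respect to a weight vector `w`. -/
def wt {n : ℕ} (w : Fin n → ℕ) (a : Fin n →₀ ℕ) : ℕ := ∑ i, w i * a i

/-- `m` is the monomial order which first compares weights with respect to `w` and
breaks ties by the lexicographic order with `x_n < ... < x_1`. -/
def IsWtLexOrder {n : ℕ} (m : MonomialOrder (Fin n)) (w : Fin n → ℕ) : Prop :=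
  ∀ a b, m.toSyn a < m.toSyn b ↔ (wt w a < wt w b ∨ (wt w a = wt w b ∧ lexLt a b))

/-- `a` is the exponent vector of the leading monomial of `f` with respect to `m`. -/
def IsLeadMono {K : Type*} [Field K] {n : ℕ} (m : MonomialOrder (Fin n))
    (f : MvPolynomial (Fin n) K) (a : Fin n →₀ ℕ) : Prop :=
  a ∈ f.support ∧ ∀ b ∈ f.support, b ≠ a → m.toSyn b < m.toSyn a

/-- The initial ideal of `I` with respect to the monomial order `m`: the ideal
generated by the leading monomials of the nonzero elements of `I`. -/
noncomputable def initialIdeal {K : Type*} [Field K] {n : ℕ} (m : MonomialOrder (Fin n))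
    (I : Ideal (MvPolynomial (Fin n) K)) : Ideal (MvPolynomial (Fin n) K) :=
  Ideal.span {p | ∃ f ∈ I, ∃ a, IsLeadMono m f a ∧ p = monomial a 1}

/-- `G` is a Gröbner basis of `I` with respect to `m`: it generates `I` and the
leading monomials of its elements generate the initial ideal of `I`. -/
def IsGroebnerBasis {K : Type*} [Field K] {n : ℕ} (m : MonomialOrder (Fin n))
    (I : Ideal (MvPolynomial (Fin n) K)) (G : Set (MvPolynomial (Fin n) K)) : Prop :=
  Ideal.span G = I ∧
  Ideal.span {p | ∃ g ∈ G, ∃ a, IsLeadMono m g a ∧ p = monomial a 1} = initialIdeal m I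

/-- The variable `x_{3i+k}` (0-indexed) among the `3d` variables. -/
def v (d : ℕ) (i : Fin d) (k : Fin 3) : Fin (3*d) :=
  ⟨3*i.val + k.val, by have := i.isLt; have := k.isLt; omega⟩

/-- The ideal of `K[x_1, ..., x_{3d}]` generated, for `1 ≤ i ≤ d`, by
`x_{3i-2}^2 - x_{3i-1}x_{3i}`, `x_{3i-2}x_{3i-1} - x_{3i}^2`, `x_{3i-2}x_{3i} - x_{3i-1}^2`. -/
noncomputable def bigIdeal (K : Type*) [Field K] (d : ℕ) : Ideal (MvPolynomial (Fin (3*d)) K) :=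
  Ideal.span (⋃ i : Fin d,
    {X (v d i 0)^2 - X (v d i 1) * X (v d i 2),
     X (v d i 0) * X (v d i 1) - X (v d i 2)^2,
     X (v d i 0) * X (v d i 2) - X (v d i 1)^2})

/-- The weight vector `w_r = (1,2,2,...,1,2,2,1,1,...,1)` with `r` blocks `(1,2,2)`. -/
def wvec (d r : ℕ) : Fin (3*d) → ℕ :=
  fun j => if j.val < 3*r ∧ j.val % 3 ≠ 0 then 2 else 1


namespace Stmt18

open Finsupp

variable {d r : ℕ}

lemma v_val (d : ℕ) (i : Fin d) (k : Fin 3) : (v d i k).val = 3 * i.val + k.val := rfl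

lemma v_inj_iff (d : ℕ) (i i' : Fin d) (k k' : Fin 3) :
    v d i k = v d i' k' ↔ i = i' ∧ k = k' := by
  constructor
  · intro h
    have h' : 3 * i.val + k.val = 3 * i'.val + k'.val := congrArg Fin.val h
    have hk := k.isLt; have hk' := k'.isLt
    exact ⟨Fin.ext (by omega), Fin.ext (by omega)⟩
  · rintro ⟨rfl, rfl⟩; rfl

lemma single_v_apply (e : ℕ) (i i' : Fin d) (k k' : Fin 3) :
    (Finsupp.single (v d i k) e) (v d i' k') = if i = i' ∧ k = k' then e else 0 := by
  simp [Finsupp.single_apply, v_inj_iff]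

lemma single_apply_of_val_lt (i : Fin d) (k : Fin 3) (e : ℕ) (j : Fin (3*d))
    (hj : j.val < 3 * i.val + k.val) : (Finsupp.single (v d i k) e) j = 0 := by
  rw [Finsupp.single_apply, if_neg]
  intro h
  rw [← h, v_val] at hj
  omega

lemma wt_single {n : ℕ} (w : Fin n → ℕ) (j : Fin n) (e : ℕ) :
    wt w (Finsupp.single j e) = w j * e := by
  simp [wt, Finsupp.single_apply, mul_ite, mul_zero]

lemma wt_add {n : ℕ} (w : Fin n → ℕ) (a b : Fin n →₀ ℕ) :
    wt w (a + b) = wt w a + wt w b := by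
  simp [wt, Finsupp.add_apply, mul_add, Finset.sum_add_distrib]

lemma wvec_v0 (i : Fin d) : wvec d r (v d i 0) = 1 := by
  simp only [wvec]
  rw [if_neg]
  simp only [v_val, Fin.val_zero]
  omega

lemma wvec_v_lt (i : Fin d) (k : Fin 3) (hk : k.val ≠ 0) (h : i.val < r) :
    wvec d r (v d i k) = 2 := by
  have hk3 := k.isLt
  simp only [wvec]
  rw [if_pos]
  simp only [v_val]
  constructor <;> omega

lemma wvec_v_ge (i : Fin d) (k : Fin 3) (h : r ≤ i.val) : wvec d r (v d i k) = 1 := by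
  have hk3 := k.isLt
  simp only [wvec]
  rw [if_neg]
  simp only [v_val]
  omega

end Stmt18

namespace Stmt18

open Finsupp

variable {d r : ℕ}

/-- The Gröbner basis, given as pairs (lead exponent, tail exponent). -/
noncomputable def genPairs (d r : ℕ) (i : Fin d) : List ((Fin (3*d) →₀ ℕ) × (Fin (3*d) →₀ ℕ)) :=
  if i.val < r then
    [(single (v d i 1) 1 + single (v d i 2) 1, single (v d i 0) 2),
     (single (v d i 1) 2, single (v d i 0) 1 + single (v d i 2) 1),
     (single (v d i 2) 2, single (v d i 0) 1 + single (v d i 1) 1)]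
  else
    [(single (v d i 0) 2, single (v d i 1) 1 + single (v d i 2) 1),
     (single (v d i 0) 1 + single (v d i 1) 1, single (v d i 2) 2),
     (single (v d i 0) 1 + single (v d i 2) 1, single (v d i 1) 2),
     (single (v d i 1) 3, single (v d i 2) 3)]

def IsGen (d r : ℕ) (β δ : Fin (3*d) →₀ ℕ) : Prop :=
  ∃ i : Fin d, (β, δ) ∈ genPairs d r i

lemma X_mul_X_eq {K : Type*} [Field K] {n : ℕ} (j k : Fin n) :
    (X j * X k : MvPolynomial (Fin n) K) = monomial (single j 1 + single k 1) 1 := by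
  rw [← pow_one (X j), ← pow_one (X k), X_pow_eq_monomial, X_pow_eq_monomial,
    monomial_mul, one_mul]

lemma gen_mem {K : Type*} [Field K] {β δ : Fin (3*d) →₀ ℕ} (h : IsGen d r β δ) :
    (monomial β 1 - monomial δ (1:K)) ∈ bigIdeal K d := by
  obtain ⟨i, hi⟩ := h
  have h1 : (X (v d i 0)^2 - X (v d i 1) * X (v d i 2) : MvPolynomial (Fin (3*d)) K)
      ∈ bigIdeal K d :=
    Ideal.subset_span (Set.mem_iUnion.mpr ⟨i, by simp⟩)
  have h2 : (X (v d i 0) * X (v d i 1) - X (v d i 2)^2 : MvPolynomial (Fin (3*d)) K)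
      ∈ bigIdeal K d :=
    Ideal.subset_span (Set.mem_iUnion.mpr ⟨i, by simp⟩)
  have h3 : (X (v d i 0) * X (v d i 2) - X (v d i 1)^2 : MvPolynomial (Fin (3*d)) K)
      ∈ bigIdeal K d :=
    Ideal.subset_span (Set.mem_iUnion.mpr ⟨i, by simp⟩)
  by_cases hir : i.val < r <;>
    simp only [genPairs, hir, if_true, if_false, List.mem_cons, List.mem_singleton,
      List.not_mem_nil, or_false, Prod.mk.injEq] at hi
  · rcases hi with ⟨rfl, rfl⟩ | ⟨rfl, rfl⟩ | ⟨rfl, rfl⟩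
    · have e : (monomial (single (v d i 1) 1 + single (v d i 2) 1) 1 -
          monomial (single (v d i 0) 2) (1:K)) =
          -(X (v d i 0)^2 - X (v d i 1) * X (v d i 2)) := by
        rw [X_pow_eq_monomial, X_mul_X_eq]; ring
      rw [e]; exact neg_mem h1
    · have e : (monomial (single (v d i 1) 2) 1 -
          monomial (single (v d i 0) 1 + single (v d i 2) 1) (1:K)) =
          -(X (v d i 0) * X (v d i 2) - X (v d i 1)^2) := by
        rw [X_pow_eq_monomial, X_mul_X_eq]; ring
      rw [e]; exact neg_mem h3
    · have e : (monomial (single (v d i 2) 2) 1 -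
          monomial (single (v d i 0) 1 + single (v d i 1) 1) (1:K)) =
          -(X (v d i 0) * X (v d i 1) - X (v d i 2)^2) := by
        rw [X_pow_eq_monomial, X_mul_X_eq]; ring
      rw [e]; exact neg_mem h2
  · rcases hi with ⟨rfl, rfl⟩ | ⟨rfl, rfl⟩ | ⟨rfl, rfl⟩ | ⟨rfl, rfl⟩
    · have e : (monomial (single (v d i 0) 2) 1 -
          monomial (single (v d i 1) 1 + single (v d i 2) 1) (1:K)) =
          (X (v d i 0)^2 - X (v d i 1) * X (v d i 2)) := by
        rw [X_pow_eq_monomial, X_mul_X_eq]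
      rw [e]; exact h1
    · have e : (monomial (single (v d i 0) 1 + single (v d i 1) 1) 1 -
          monomial (single (v d i 2) 2) (1:K)) =
          (X (v d i 0) * X (v d i 1) - X (v d i 2)^2) := by
        rw [X_pow_eq_monomial, X_mul_X_eq]
      rw [e]; exact h2
    · have e : (monomial (single (v d i 0) 1 + single (v d i 2) 1) 1 -
          monomial (single (v d i 1) 2) (1:K)) =
          (X (v d i 0) * X (v d i 2) - X (v d i 1)^2) := by
        rw [X_pow_eq_monomial, X_mul_X_eq]
      rw [e]; exact h3
    · have e : (monomial (single (v d i 1) 3) 1 -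
          monomial (single (v d i 2) 3) (1:K)) =
          X (v d i 2) * (X (v d i 0) * X (v d i 1) - X (v d i 2)^2) -
          X (v d i 1) * (X (v d i 0) * X (v d i 2) - X (v d i 1)^2) := by
        simp only [← X_pow_eq_monomial]
        ring
      rw [e]
      exact Ideal.sub_mem _ (Ideal.mul_mem_left _ _ h2) (Ideal.mul_mem_left _ _ h3)

end Stmt18

namespace Stmt18

open Finsupp

variable {d r : ℕ}

lemma fin30 : ((0:Fin 3)).val = 0 := rfl
lemma fin31 : ((1:Fin 3)).val = 1 := rfl
lemma fin32 : ((2:Fin 3)).val = 2 := rfl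

lemma gen_lt {m : MonomialOrder (Fin (3*d))} (hm : IsWtLexOrder m (wvec d r))
    {β δ : Fin (3*d) →₀ ℕ} (h : IsGen d r β δ) : m.toSyn δ < m.toSyn β := by
  obtain ⟨i, hi⟩ := h
  rw [hm]
  by_cases hir : i.val < r <;>
    simp only [genPairs, hir, if_true, if_false, List.mem_cons, List.mem_singleton,
      List.not_mem_nil, or_false, Prod.mk.injEq] at hi
  · rcases hi with ⟨rfl, rfl⟩ | ⟨rfl, rfl⟩ | ⟨rfl, rfl⟩ <;>
      exact Or.inl (by
        simp [wt_add, wt_single, wvec_v0, wvec_v_lt i 1 (by decide) hir,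
          wvec_v_lt i 2 (by decide) hir])
  · push_neg at hir
    have w0 := wvec_v_ge (r := r) i 0 hir
    have w1 := wvec_v_ge (r := r) i 1 hir
    have w2 := wvec_v_ge (r := r) i 2 hir
    rcases hi with ⟨rfl, rfl⟩ | ⟨rfl, rfl⟩ | ⟨rfl, rfl⟩ | ⟨rfl, rfl⟩ <;>
      refine Or.inr ⟨by simp [wt_add, wt_single, w0, w1, w2], ?_⟩
    · refine ⟨v d i 0, ?_, ?_⟩
      · simp [Finsupp.add_apply, single_v_apply]
      · intro j hj
        rw [Fin.lt_def, v_val, fin30] at hj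
        simp [Finsupp.add_apply,
          single_apply_of_val_lt i 0 2 j (by rw [fin30]; omega),
          single_apply_of_val_lt i 1 1 j (by rw [fin31]; omega),
          single_apply_of_val_lt i 2 1 j (by rw [fin32]; omega)]
    · refine ⟨v d i 0, ?_, ?_⟩
      · simp [Finsupp.add_apply, single_v_apply]
      · intro j hj
        rw [Fin.lt_def, v_val, fin30] at hj
        simp [Finsupp.add_apply,
          single_apply_of_val_lt i 0 1 j (by rw [fin30]; omega),
          single_apply_of_val_lt i 1 1 j (by rw [fin31]; omega),
          single_apply_of_val_lt i 2 2 j (by rw [fin32]; omega)]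
    · refine ⟨v d i 0, ?_, ?_⟩
      · simp [Finsupp.add_apply, single_v_apply]
      · intro j hj
        rw [Fin.lt_def, v_val, fin30] at hj
        simp [Finsupp.add_apply,
          single_apply_of_val_lt i 0 1 j (by rw [fin30]; omega),
          single_apply_of_val_lt i 1 2 j (by rw [fin31]; omega),
          single_apply_of_val_lt i 2 1 j (by rw [fin32]; omega)]
    · refine ⟨v d i 1, ?_, ?_⟩
      · simp [single_v_apply]
      · intro j hj
        rw [Fin.lt_def, v_val, fin31] at hj
        simp [single_apply_of_val_lt i 1 3 j (by rw [fin31]; omega),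
          single_apply_of_val_lt i 2 3 j (by rw [fin32]; omega)]

end Stmt18

namespace Stmt18

open Finsupp

variable {d r : ℕ}

/-- The per-block invariant: total degree and (b - c) mod 3. -/
def phi (d : ℕ) : (Fin (3*d) →₀ ℕ) →+ (Fin d → ℕ × ZMod 3) where
  toFun a := fun i => (a (v d i 0) + a (v d i 1) + a (v d i 2),
    (a (v d i 1) : ZMod 3) - (a (v d i 2) : ZMod 3))
  map_zero' := by funext i; simp
  map_add' a b := by
    funext i
    simp only [Finsupp.add_apply, Pi.add_apply, Prod.mk_add_mk, Prod.mk.injEq]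
    constructor
    · ring
    · push_cast; ring

lemma phi_apply (a : Fin (3*d) →₀ ℕ) (i : Fin d) :
    phi d a i = (a (v d i 0) + a (v d i 1) + a (v d i 2),
      (a (v d i 1) : ZMod 3) - (a (v d i 2) : ZMod 3)) := rfl

lemma phi_rel1 (i : Fin d) :
    phi d (single (v d i 0) 2) = phi d (single (v d i 1) 1 + single (v d i 2) 1) := by
  funext i'
  by_cases hii : i = i' <;>
    simp [phi_apply, Finsupp.add_apply, single_v_apply, hii] <;> decide

lemma phi_rel2 (i : Fin d) :
    phi d (single (v d i 0) 1 + single (v d i 1) 1) = phi d (single (v d i 2) 2) := by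
  funext i'
  by_cases hii : i = i' <;>
    simp [phi_apply, Finsupp.add_apply, single_v_apply, hii] <;> decide

lemma phi_rel3 (i : Fin d) :
    phi d (single (v d i 0) 1 + single (v d i 2) 1) = phi d (single (v d i 1) 2) := by
  funext i'
  by_cases hii : i = i' <;>
    simp [phi_apply, Finsupp.add_apply, single_v_apply, hii] <;> decide

lemma phi_rel7 (i : Fin d) :
    phi d (single (v d i 1) 3) = phi d (single (v d i 2) 3) := by
  funext i'
  by_cases hii : i = i' <;>
    simp [phi_apply, Finsupp.add_apply, single_v_apply, hii] <;> decide

lemma phi_gen {β δ : Fin (3*d) →₀ ℕ} (h : IsGen d r β δ) : phi d β = phi d δ := by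
  obtain ⟨i, hi⟩ := h
  by_cases hir : i.val < r <;>
    simp only [genPairs, hir, if_true, if_false, List.mem_cons, List.mem_singleton,
      List.not_mem_nil, or_false, Prod.mk.injEq] at hi
  · rcases hi with ⟨rfl, rfl⟩ | ⟨rfl, rfl⟩ | ⟨rfl, rfl⟩
    · exact (phi_rel1 i).symm
    · exact (phi_rel3 i).symm
    · exact (phi_rel2 i).symm
  · rcases hi with ⟨rfl, rfl⟩ | ⟨rfl, rfl⟩ | ⟨rfl, rfl⟩ | ⟨rfl, rfl⟩
    · exact phi_rel1 i
    · exact phi_rel2 i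
    · exact phi_rel3 i
    · exact phi_rel7 i

/-- Standard (non-divisible) exponent vectors, described numerically. -/
def Std (d r : ℕ) (a : Fin (3*d) →₀ ℕ) : Prop :=
  ∀ i : Fin d,
    (i.val < r → a (v d i 1) + a (v d i 2) ≤ 1) ∧
    (r ≤ i.val →
      (a (v d i 0) = 0 ∨ (a (v d i 0) = 1 ∧ a (v d i 1) = 0 ∧ a (v d i 2) = 0)) ∧
      a (v d i 1) ≤ 2)

lemma v_surj (j : Fin (3*d)) : ∃ (i : Fin d) (k : Fin 3), j = v d i k := by
  have hj := j.isLt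
  exact ⟨⟨j.val / 3, by omega⟩, ⟨j.val % 3, by omega⟩, Fin.ext (by simp [v_val]; omega)⟩

lemma std_phi_inj {a b : Fin (3*d) →₀ ℕ} (ha : Std d r a) (hb : Std d r b)
    (h : phi d a = phi d b) : a = b := by
  ext j
  obtain ⟨i, k, rfl⟩ := v_surj j
  have hi := congrFun h i
  have h1 : a (v d i 0) + a (v d i 1) + a (v d i 2)
      = b (v d i 0) + b (v d i 1) + b (v d i 2) := congrArg Prod.fst hi
  have h2 : (a (v d i 1) : ZMod 3) - (a (v d i 2) : ZMod 3)
      = (b (v d i 1) : ZMod 3) - (b (v d i 2) : ZMod 3) := congrArg Prod.snd hi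
  have h2' : (a (v d i 1) + b (v d i 2)) % 3 = (b (v d i 1) + a (v d i 2)) % 3 := by
    have hc : ((a (v d i 1) + b (v d i 2) : ℕ) : ZMod 3)
        = ((b (v d i 1) + a (v d i 2) : ℕ) : ZMod 3) := by
      push_cast
      linear_combination h2
    simpa [Nat.ModEq] using (ZMod.natCast_eq_natCast_iff _ _ _).mp hc
  obtain ⟨ha1, ha2⟩ := ha i
  obtain ⟨hb1, hb2⟩ := hb i
  have key : a (v d i 0) = b (v d i 0) ∧ a (v d i 1) = b (v d i 1)
      ∧ a (v d i 2) = b (v d i 2) := by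
    by_cases hir : i.val < r
    · have c1 := ha1 hir
      have c2 := hb1 hir
      omega
    · have c1 := ha2 (le_of_not_gt hir)
      have c2 := hb2 (le_of_not_gt hir)
      omega
  fin_cases k
  · exact key.1
  · exact key.2.1
  · exact key.2.2

lemma single_le {a : Fin (3*d) →₀ ℕ} {j : Fin (3*d)} {e : ℕ} (h : e ≤ a j) :
    single j e ≤ a := by
  rw [Finsupp.le_def]
  intro x
  rw [Finsupp.single_apply]
  split
  · next heq => exact heq ▸ h
  · exact Nat.zero_le _

lemma add_single_le {a : Fin (3*d) →₀ ℕ} {j k : Fin (3*d)} {e f : ℕ} (hjk : j ≠ k)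
    (h1 : e ≤ a j) (h2 : f ≤ a k) : single j e + single k f ≤ a := by
  rw [Finsupp.le_def]
  intro x
  rw [Finsupp.add_apply, Finsupp.single_apply, Finsupp.single_apply]
  by_cases hj : j = x
  · subst hj
    rw [if_pos rfl, if_neg (fun hk' : k = j => hjk hk'.symm)]
    omega
  · rw [if_neg hj]
    by_cases hk : k = x
    · subst hk
      simpa using h2
    · simp [hk]

lemma v_ne (i : Fin d) {k k' : Fin 3} (h : k ≠ k') : v d i k ≠ v d i k' :=
  fun h' => h ((v_inj_iff d i i k k').mp h').2

lemma not_std {a : Fin (3*d) →₀ ℕ} (h : ¬ Std d r a) :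
    ∃ β δ, IsGen d r β δ ∧ β ≤ a := by
  simp only [Std, not_forall] at h
  obtain ⟨i, hi⟩ := h
  by_cases hir : i.val < r
  · have hv : 1 < a (v d i 1) + a (v d i 2) := by
      by_contra hc
      push_neg at hc
      exact hi ⟨fun _ => hc, fun hri => absurd hir (by omega)⟩
    by_cases h1 : 2 ≤ a (v d i 1)
    · refine ⟨single (v d i 1) 2, single (v d i 0) 1 + single (v d i 2) 1,
        ⟨i, ?_⟩, single_le h1⟩
      simp [genPairs, hir]
    · by_cases h2 : 2 ≤ a (v d i 2)
      · refine ⟨single (v d i 2) 2, single (v d i 0) 1 + single (v d i 1) 1,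
          ⟨i, ?_⟩, single_le h2⟩
        simp [genPairs, hir]
      · refine ⟨single (v d i 1) 1 + single (v d i 2) 1, single (v d i 0) 2,
          ⟨i, ?_⟩, add_single_le (v_ne i (by decide)) (by omega) (by omega)⟩
        simp [genPairs, hir]
  · have hv : ¬ ((a (v d i 0) = 0 ∨ (a (v d i 0) = 1 ∧ a (v d i 1) = 0 ∧ a (v d i 2) = 0))
        ∧ a (v d i 1) ≤ 2) :=
      fun hc => hi ⟨fun hlt => absurd hlt hir, fun _ => hc⟩
    by_cases h7 : 3 ≤ a (v d i 1)
    · refine ⟨single (v d i 1) 3, single (v d i 2) 3, ⟨i, ?_⟩, single_le h7⟩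
      simp [genPairs, hir]
    · have hv' : ¬ (a (v d i 0) = 0 ∨ (a (v d i 0) = 1 ∧ a (v d i 1) = 0 ∧ a (v d i 2) = 0)) := by
        intro hc
        exact hv ⟨hc, by omega⟩
      push_neg at hv'
      obtain ⟨hv0, hv1⟩ := hv'
      by_cases h4 : 2 ≤ a (v d i 0)
      · refine ⟨single (v d i 0) 2, single (v d i 1) 1 + single (v d i 2) 1,
          ⟨i, ?_⟩, single_le h4⟩
        simp [genPairs, hir]
      · have ha0 : a (v d i 0) = 1 := by omega
        have h12 : 1 ≤ a (v d i 1) ∨ 1 ≤ a (v d i 2) := by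
          by_contra hc
          push_neg at hc
          exact hv1 ha0 (by omega) (by omega)
        rcases h12 with h5 | h5
        · refine ⟨single (v d i 0) 1 + single (v d i 1) 1, single (v d i 2) 2,
            ⟨i, ?_⟩, add_single_le (v_ne i (by decide)) (by omega) (by omega)⟩
          simp [genPairs, hir]
        · refine ⟨single (v d i 0) 1 + single (v d i 2) 1, single (v d i 1) 2,
            ⟨i, ?_⟩, add_single_le (v_ne i (by decide)) (by omega) (by omega)⟩
          simp [genPairs, hir]

end Stmt18

namespace Stmt18

open Finsupp

variable {d r : ℕ} {K : Type*} [Field K]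

/-- The ring homomorphism to the monoid algebra of the invariant monoid. -/
noncomputable def Psi (K : Type*) [Field K] (d : ℕ) :
    MvPolynomial (Fin (3*d)) K →+* AddMonoidAlgebra K (Fin d → ℕ × ZMod 3) :=
  AddMonoidAlgebra.mapDomainRingHom K (phi d)

lemma Psi_apply (f : MvPolynomial (Fin (3*d)) K) :
    Psi K d f = AddMonoidAlgebra.mapDomain (phi d) f := rfl

lemma Psi_monomial (a : Fin (3*d) →₀ ℕ) (c : K) :
    Psi K d (monomial a c) = AddMonoidAlgebra.single (phi d a) c := by
  rw [Psi_apply, ← single_eq_monomial, AddMonoidAlgebra.mapDomain_single]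

lemma Psi_ker : bigIdeal K d ≤ RingHom.ker (Psi K d) := by
  rw [bigIdeal, Ideal.span_le]
  rintro p hp
  simp only [Set.mem_iUnion] at hp
  obtain ⟨i, hp⟩ := hp
  simp only [Set.mem_insert_iff, Set.mem_singleton_iff] at hp
  rw [SetLike.mem_coe, RingHom.mem_ker]
  rcases hp with rfl | rfl | rfl
  · rw [show (X (v d i 0)^2 - X (v d i 1) * X (v d i 2) : MvPolynomial (Fin (3*d)) K)
        = monomial (single (v d i 0) 2) 1
          - monomial (single (v d i 1) 1 + single (v d i 2) 1) 1 by
      rw [X_pow_eq_monomial, X_mul_X_eq]]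
    rw [map_sub, Psi_monomial, Psi_monomial, phi_rel1, sub_self]
  · rw [show (X (v d i 0) * X (v d i 1) - X (v d i 2)^2 : MvPolynomial (Fin (3*d)) K)
        = monomial (single (v d i 0) 1 + single (v d i 1) 1) 1
          - monomial (single (v d i 2) 2) 1 by
      rw [X_pow_eq_monomial, X_mul_X_eq]]
    rw [map_sub, Psi_monomial, Psi_monomial, phi_rel2, sub_self]
  · rw [show (X (v d i 0) * X (v d i 2) - X (v d i 1)^2 : MvPolynomial (Fin (3*d)) K)
        = monomial (single (v d i 0) 1 + single (v d i 2) 1) 1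
          - monomial (single (v d i 1) 2) 1 by
      rw [X_pow_eq_monomial, X_mul_X_eq]]
    rw [map_sub, Psi_monomial, Psi_monomial, phi_rel3, sub_self]

lemma Psi_inj_std {f : MvPolynomial (Fin (3*d)) K}
    (hstd : ∀ a ∈ f.support, Std d r a) (hf : Psi K d f = 0) : f = 0 := by
  by_contra h
  obtain ⟨a, ha⟩ := (MvPolynomial.support_nonempty.mpr h : f.support.Nonempty)
  have key : (AddMonoidAlgebra.mapDomain (phi d) f).coeff (phi d a) = MvPolynomial.coeff a f := by
    apply Finsupp.mapDomain_apply' {x | Std d r x} (AddMonoidAlgebra.coeff f)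
    · intro x hx
      exact hstd x hx
    · intro x hx y hy hxy
      exact std_phi_inj hx hy hxy
    · exact hstd a ha
  rw [← Psi_apply, hf] at key
  exact absurd key.symm (MvPolynomial.mem_support_iff.mp ha)

end Stmt18

namespace Stmt18

open Finsupp

variable {d r : ℕ} {K : Type*} [Field K]

/-- The `m`-degree of a polynomial, in the synonym type. -/
noncomputable def D (m : MonomialOrder (Fin (3*d))) (f : MvPolynomial (Fin (3*d)) K) :
    m.syn := f.support.sup m.toSyn

lemma le_D {m : MonomialOrder (Fin (3*d))} {f : MvPolynomial (Fin (3*d)) K}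
    {b : Fin (3*d) →₀ ℕ} (hb : b ∈ f.support) : m.toSyn b ≤ D m f :=
  Finset.le_sup hb

lemma exists_top {m : MonomialOrder (Fin (3*d))} {f : MvPolynomial (Fin (3*d)) K}
    (hf : f ≠ 0) : ∃ a ∈ f.support, D m f = m.toSyn a := by
  obtain ⟨a, ha, h⟩ := Finset.exists_mem_eq_sup f.support
    (MvPolynomial.support_nonempty.mpr hf) m.toSyn
  exact ⟨a, ha, h⟩

lemma NF (m : MonomialOrder (Fin (3*d))) (hm : IsWtLexOrder m (wvec d r)) :
    ∀ f : MvPolynomial (Fin (3*d)) K, ∃ g : MvPolynomial (Fin (3*d)) K,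
      f - g ∈ bigIdeal K d ∧ (∀ b ∈ g.support, Std d r b) ∧
      (∀ b ∈ g.support, m.toSyn b ≤ D m f) ∧
      (∀ b, Std d r b → D m f ≤ m.toSyn b →
        MvPolynomial.coeff b g = MvPolynomial.coeff b f) := by
  suffices H : ∀ (s : m.syn) (f : MvPolynomial (Fin (3*d)) K), D m f = s →
      ∃ g : MvPolynomial (Fin (3*d)) K,
      f - g ∈ bigIdeal K d ∧ (∀ b ∈ g.support, Std d r b) ∧
      (∀ b ∈ g.support, m.toSyn b ≤ D m f) ∧
      (∀ b, Std d r b → D m f ≤ m.toSyn b →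
        MvPolynomial.coeff b g = MvPolynomial.coeff b f) by
    exact fun f => H (D m f) f rfl
  intro s
  induction s using WellFoundedLT.induction with
  | ind s ih =>
  intro f hDf
  classical
  rcases eq_or_ne f 0 with rfl | hf
  · exact ⟨0, by simp [Ideal.zero_mem], by simp, by simp, fun b _ _ => rfl⟩
  obtain ⟨a, haf, hD⟩ := exists_top (m := m) hf
  have hmax : ∀ b ∈ f.support, m.toSyn b ≤ m.toSyn a := fun b hb => hD ▸ le_D hb
  set c := MvPolynomial.coeff a f with hc
  have hc0 : c ≠ 0 := MvPolynomial.mem_support_iff.mp haf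
  by_cases hstd : Std d r a
  · -- leading monomial is standard: split it off
    set f₁ := f - monomial a c with hf₁
    have hsub : ∀ b ∈ f₁.support, m.toSyn b < m.toSyn a := by
      intro b hb
      have hb' := MvPolynomial.mem_support_iff.mp hb
      have hbne : b ≠ a := by
        rintro rfl
        apply hb'
        simp [hf₁, hc, MvPolynomial.coeff_sub, MvPolynomial.coeff_monomial]
      have hbf : b ∈ f.support := by
        rw [MvPolynomial.mem_support_iff]
        intro h0
        apply hb'
        simp [hf₁, MvPolynomial.coeff_sub, MvPolynomial.coeff_monomial, h0,
          Ne.symm hbne]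
      exact lt_of_le_of_ne (hmax b hbf) (fun h => hbne (m.toSyn.injective h))
    rcases eq_or_ne f₁ 0 with h10 | h10
    · refine ⟨monomial a c, ?_, ?_, ?_, ?_⟩
      · rw [show f - monomial a c = f₁ from rfl, h10]
        exact Ideal.zero_mem _
      · intro b hb
        rw [MvPolynomial.support_monomial, if_neg hc0] at hb
        simp only [Finset.mem_singleton] at hb
        exact hb ▸ hstd
      · intro b hb
        rw [MvPolynomial.support_monomial, if_neg hc0] at hb
        simp only [Finset.mem_singleton] at hb
        rw [hb, hD]
      · intro b hbstd hble
        rcases eq_or_ne b a with rfl | hba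
        · simp [hc, MvPolynomial.coeff_monomial]
        · have hout : b ∉ f.support := by
            intro hbf
            have := hmax b hbf
            rw [hD] at hble
            have : m.toSyn b = m.toSyn a := le_antisymm this hble
            exact hba (m.toSyn.injective this)
          rw [MvPolynomial.coeff_monomial, if_neg (Ne.symm hba),
            (MvPolynomial.notMem_support_iff.mp hout)]
    · have hbot : (⊥ : m.syn) < m.toSyn a := by
        obtain ⟨b₀, hb₀, _⟩ := exists_top (m := m) h10
        exact lt_of_le_of_lt bot_le (hsub b₀ hb₀)
      have hlt : D m f₁ < s := by
        rw [← hDf, hD]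
        exact (Finset.sup_lt_iff hbot).mpr hsub
      obtain ⟨g₁, hg1, hg2, hg3, hg4⟩ := ih (D m f₁) hlt f₁ rfl
      have hg3' : ∀ b ∈ g₁.support, m.toSyn b < m.toSyn a :=
        fun b hb => lt_of_le_of_lt (hg3 b hb) (by rw [← hD, hDf]; exact hlt)
      refine ⟨monomial a c + g₁, ?_, ?_, ?_, ?_⟩
      · have : f - (monomial a c + g₁) = f₁ - g₁ := by rw [hf₁]; ring
        rw [this]
        exact hg1
      · intro b hb
        rcases Finset.mem_union.mp (MvPolynomial.support_add hb) with hb' | hb'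
        · rw [MvPolynomial.support_monomial, if_neg hc0] at hb'
          simp only [Finset.mem_singleton] at hb'
          exact hb' ▸ hstd
        · exact hg2 b hb'
      · intro b hb
        rw [hD]
        rcases Finset.mem_union.mp (MvPolynomial.support_add hb) with hb' | hb'
        · rw [MvPolynomial.support_monomial, if_neg hc0] at hb'
          simp only [Finset.mem_singleton] at hb'
          rw [hb']
        · exact (hg3' b hb').le
      · intro b hbstd hble
        rw [MvPolynomial.coeff_add]
        rcases eq_or_ne b a with rfl | hba
        · have : b ∉ g₁.support := fun hbg => lt_irrefl _ (hg3' b hbg)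
          rw [MvPolynomial.coeff_monomial, if_pos rfl,
            MvPolynomial.notMem_support_iff.mp this, add_zero, hc]
        · have hgt : m.toSyn a < m.toSyn b :=
            lt_of_le_of_ne (hD ▸ hble) (fun h => hba (m.toSyn.injective h.symm))
          have hbg : b ∉ g₁.support := fun hbg => lt_irrefl _ (lt_trans (hg3' b hbg) hgt)
          have hbf : MvPolynomial.coeff b f = 0 := by
            by_contra h0
            exact lt_irrefl _ (lt_of_lt_of_le hgt
              (hmax b (MvPolynomial.mem_support_iff.mpr h0)))
          rw [MvPolynomial.coeff_monomial, if_neg (Ne.symm hba),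
            MvPolynomial.notMem_support_iff.mp hbg, add_zero, hbf]
  · -- leading monomial is not standard: reduce by a generator
    obtain ⟨β, δ, hgen, hβa⟩ := not_std hstd
    have hβδ := gen_lt hm hgen
    set e : Fin (3*d) →₀ ℕ := (a - β) + δ with he
    have hea : m.toSyn e < m.toSyn a := by
      have h1 : (a - β) + β = a := tsub_add_cancel_of_le hβa
      calc m.toSyn e = m.toSyn (a - β) + m.toSyn δ := map_add _ _ _
        _ < m.toSyn (a - β) + m.toSyn β := by exact add_lt_add_right hβδ _
        _ = m.toSyn ((a - β) + β) := (map_add _ _ _).symm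
        _ = m.toSyn a := by rw [h1]
    have hprod : (monomial (a - β) c) * (monomial β 1 - monomial δ (1:K))
        = monomial a c - monomial e c := by
      rw [mul_sub, MvPolynomial.monomial_mul, MvPolynomial.monomial_mul,
        tsub_add_cancel_of_le hβa, mul_one, ← he]
    set f₁ := f - (monomial (a - β) c) * (monomial β 1 - monomial δ (1:K)) with hf₁
    have hf₁' : f₁ = (f - monomial a c) + monomial e c := by rw [hf₁, hprod]; ring
    have hsub : ∀ b ∈ f₁.support, m.toSyn b < m.toSyn a := by
      intro b hb
      have hb' := MvPolynomial.mem_support_iff.mp hb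
      rw [hf₁'] at hb'
      have hbne : b ≠ a := by
        rintro rfl
        apply hb'
        have : e ≠ b := fun h => lt_irrefl _ (h ▸ hea)
        simp [hc, MvPolynomial.coeff_add, MvPolynomial.coeff_sub,
          MvPolynomial.coeff_monomial, this]
      rcases eq_or_ne b e with rfl | hbe
      · exact hea
      · have hbf : b ∈ f.support := by
          rw [MvPolynomial.mem_support_iff]
          intro h0
          apply hb'
          simp [MvPolynomial.coeff_add, MvPolynomial.coeff_sub,
            MvPolynomial.coeff_monomial, h0, Ne.symm hbne, Ne.symm hbe]
        exact lt_of_le_of_ne (hmax b hbf) (fun h => hbne (m.toSyn.injective h))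
    have hffI : f - f₁ ∈ bigIdeal K d := by
      rw [hf₁, sub_sub_cancel]
      exact Ideal.mul_mem_left _ _ (gen_mem hgen)
    have hcoefffar : ∀ b, m.toSyn a < m.toSyn b → MvPolynomial.coeff b f = 0 := by
      intro b hgt
      by_contra h0
      exact lt_irrefl _ (lt_of_lt_of_le hgt (hmax b (MvPolynomial.mem_support_iff.mpr h0)))
    rcases eq_or_ne f₁ 0 with h10 | h10
    · refine ⟨0, ?_, by simp, by simp, ?_⟩
      · rw [sub_zero, show f = f - f₁ by rw [h10, sub_zero]]
        exact hffI
      · intro b hbstd hble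
        have hba : b ≠ a := fun h => hstd (h ▸ hbstd)
        have hgt : m.toSyn a < m.toSyn b :=
          lt_of_le_of_ne (hD ▸ hble) (fun h => hba (m.toSyn.injective h.symm))
        rw [MvPolynomial.coeff_zero, hcoefffar b hgt]
    · have hbot : (⊥ : m.syn) < m.toSyn a := by
        obtain ⟨b₀, hb₀, _⟩ := exists_top (m := m) h10
        exact lt_of_le_of_lt bot_le (hsub b₀ hb₀)
      have hlt : D m f₁ < s := by
        rw [← hDf, hD]
        exact (Finset.sup_lt_iff hbot).mpr hsub
      obtain ⟨g₁, hg1, hg2, hg3, hg4⟩ := ih (D m f₁) hlt f₁ rfl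
      have hg3' : ∀ b ∈ g₁.support, m.toSyn b < m.toSyn a :=
        fun b hb => lt_of_le_of_lt (hg3 b hb) (by rw [← hD, hDf]; exact hlt)
      refine ⟨g₁, ?_, hg2, ?_, ?_⟩
      · have : f - g₁ = (f - f₁) + (f₁ - g₁) := by ring
        rw [this]
        exact Ideal.add_mem _ hffI hg1
      · intro b hb
        rw [hD]
        exact (hg3' b hb).le
      · intro b hbstd hble
        have hba : b ≠ a := fun h => hstd (h ▸ hbstd)
        have hgt : m.toSyn a < m.toSyn b :=
          lt_of_le_of_ne (hD ▸ hble) (fun h => hba (m.toSyn.injective h.symm))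
        have h1 : MvPolynomial.coeff b g₁ = MvPolynomial.coeff b f₁ :=
          hg4 b hbstd (le_of_lt (lt_of_lt_of_le hlt (hDf ▸ hD ▸ hgt.le)))
        have h2 : MvPolynomial.coeff b f₁ = 0 := by
          by_contra h0
          exact lt_irrefl _ (lt_of_lt_of_le hgt
            (le_of_lt (hsub b (MvPolynomial.mem_support_iff.mpr h0))))
        rw [h1, h2, hcoefffar b hgt]

end Stmt18

namespace Stmt18

open Finsupp

variable {d r : ℕ} {K : Type*} [Field K]

lemma gen_in_rhs {β δ : Fin (3*d) →₀ ℕ} (hgen : IsGen d r β δ) :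
    monomial β (1:K) ∈ Ideal.span (⋃ i : Fin d,
      if i.val < r then
        ({X (v d i 1) * X (v d i 2), X (v d i 1)^2, X (v d i 2)^2} :
          Set (MvPolynomial (Fin (3*d)) K))
      else
        {X (v d i 0)^2, X (v d i 0) * X (v d i 1), X (v d i 0) * X (v d i 2),
          X (v d i 1)^3}) := by
  obtain ⟨i, hi⟩ := hgen
  apply Ideal.subset_span
  rw [Set.mem_iUnion]
  refine ⟨i, ?_⟩
  by_cases hir : i.val < r <;>
    simp only [genPairs, hir, if_true, if_false, List.mem_cons, List.mem_singleton,
      List.not_mem_nil, or_false, Prod.mk.injEq] at hi <;>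
    simp only [hir, if_true, if_false]
  · rcases hi with ⟨rfl, rfl⟩ | ⟨rfl, rfl⟩ | ⟨rfl, rfl⟩
    · exact Or.inl (X_mul_X_eq _ _).symm
    · exact Or.inr (Or.inl (X_pow_eq_monomial).symm)
    · exact Or.inr (Or.inr (X_pow_eq_monomial).symm)
  · rcases hi with ⟨rfl, rfl⟩ | ⟨rfl, rfl⟩ | ⟨rfl, rfl⟩ | ⟨rfl, rfl⟩
    · exact Or.inl (X_pow_eq_monomial).symm
    · exact Or.inr (Or.inl (X_mul_X_eq _ _).symm)
    · exact Or.inr (Or.inr (Or.inl (X_mul_X_eq _ _).symm))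
    · exact Or.inr (Or.inr (Or.inr (X_pow_eq_monomial).symm))

lemma gen_lead {m : MonomialOrder (Fin (3*d))} (hm : IsWtLexOrder m (wvec d r))
    {β δ : Fin (3*d) →₀ ℕ} (hgen : IsGen d r β δ) :
    IsLeadMono m (monomial β 1 - monomial δ (1:K)) β := by
  have hlt := gen_lt hm hgen
  have hne : δ ≠ β := fun h => lt_irrefl _ (h ▸ hlt)
  constructor
  · rw [MvPolynomial.mem_support_iff, MvPolynomial.coeff_sub, MvPolynomial.coeff_monomial,
      if_pos rfl, MvPolynomial.coeff_monomial, if_neg hne, sub_zero]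
    exact one_ne_zero
  · intro b hb hbβ
    rw [MvPolynomial.mem_support_iff, MvPolynomial.coeff_sub, MvPolynomial.coeff_monomial,
      if_neg (fun h => hbβ h.symm), MvPolynomial.coeff_monomial] at hb
    by_cases hδb : δ = b
    · exact hδb ▸ hlt
    · rw [if_neg hδb] at hb
      simp at hb

end Stmt18

open Finsupp in
theorem stmt18' (K : Type*) [Field K] (d : ℕ) (hd : 0 < d) (r : ℕ) (hr : r ≤ d)
    (m : MonomialOrder (Fin (3*d))) (hm : IsWtLexOrder m (wvec d r)) :
    initialIdeal m (bigIdeal K d) =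
      Ideal.span (⋃ i : Fin d,
        if i.val < r then
          ({X (v d i 1) * X (v d i 2), X (v d i 1)^2, X (v d i 2)^2} :
            Set (MvPolynomial (Fin (3*d)) K))
        else
          {X (v d i 0)^2, X (v d i 0) * X (v d i 1), X (v d i 0) * X (v d i 2),
            X (v d i 1)^3}) := by
  classical
  apply le_antisymm
  · rw [initialIdeal, Ideal.span_le]
    rintro p ⟨f, hfI, a, ⟨haf, hlead⟩, rfl⟩
    have hf : f ≠ 0 := fun h => by simp [h] at haf
    have hD : Stmt18.D m f = m.toSyn a := by
      apply le_antisymm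
      · apply Finset.sup_le
        intro b hb
        rcases eq_or_ne b a with rfl | hba
        · exact le_refl _
        · exact (hlead b hb hba).le
      · exact Stmt18.le_D haf
    by_cases hstd : Stmt18.Std d r a
    · exfalso
      obtain ⟨g, hg1, hg2, _, hg4⟩ := Stmt18.NF m hm f
      have hgI : g ∈ bigIdeal K d := by
        have := Ideal.sub_mem _ hfI hg1
        simpa using this
      have hg0 : g = 0 :=
        Stmt18.Psi_inj_std hg2 (RingHom.mem_ker.mp (Stmt18.Psi_ker hgI))
      have hco := hg4 a hstd (le_of_eq hD)
      rw [hg0] at hco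
      exact (MvPolynomial.mem_support_iff.mp haf) (by simpa using hco.symm)
    · obtain ⟨β, δ, hgen, hβa⟩ := Stmt18.not_std hstd
      have heq : monomial a (1:K) = monomial (a - β) 1 * monomial β 1 := by
        rw [MvPolynomial.monomial_mul, tsub_add_cancel_of_le hβa, one_mul]
      rw [SetLike.mem_coe, heq]
      exact Ideal.mul_mem_left _ _ (Stmt18.gen_in_rhs hgen)
  · rw [Ideal.span_le]
    rintro p hp
    simp only [Set.mem_iUnion] at hp
    obtain ⟨i, hp⟩ := hp
    rw [SetLike.mem_coe, initialIdeal]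
    by_cases hir : i.val < r <;>
      simp only [hir, if_true, if_false, Set.mem_insert_iff, Set.mem_singleton_iff] at hp
    · rcases hp with rfl | rfl | rfl
      · refine Ideal.subset_span ⟨monomial (single (v d i 1) 1 + single (v d i 2) 1) 1
          - monomial (single (v d i 0) 2) 1,
          Stmt18.gen_mem (r := r) ⟨i, by simp [Stmt18.genPairs, hir]⟩, _,
          Stmt18.gen_lead hm ⟨i, by simp [Stmt18.genPairs, hir]⟩, (Stmt18.X_mul_X_eq _ _)⟩
      · refine Ideal.subset_span ⟨monomial (single (v d i 1) 2) 1
          - monomial (single (v d i 0) 1 + single (v d i 2) 1) 1,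
          Stmt18.gen_mem (r := r) ⟨i, by simp [Stmt18.genPairs, hir]⟩, _,
          Stmt18.gen_lead hm ⟨i, by simp [Stmt18.genPairs, hir]⟩, X_pow_eq_monomial⟩
      · refine Ideal.subset_span ⟨monomial (single (v d i 2) 2) 1
          - monomial (single (v d i 0) 1 + single (v d i 1) 1) 1,
          Stmt18.gen_mem (r := r) ⟨i, by simp [Stmt18.genPairs, hir]⟩, _,
          Stmt18.gen_lead hm ⟨i, by simp [Stmt18.genPairs, hir]⟩, X_pow_eq_monomial⟩
    · rcases hp with rfl | rfl | rfl | rfl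
      · refine Ideal.subset_span ⟨monomial (single (v d i 0) 2) 1
          - monomial (single (v d i 1) 1 + single (v d i 2) 1) 1,
          Stmt18.gen_mem (r := r) ⟨i, by simp [Stmt18.genPairs, hir]⟩, _,
          Stmt18.gen_lead hm ⟨i, by simp [Stmt18.genPairs, hir]⟩, X_pow_eq_monomial⟩
      · refine Ideal.subset_span ⟨monomial (single (v d i 0) 1 + single (v d i 1) 1) 1
          - monomial (single (v d i 2) 2) 1,
          Stmt18.gen_mem (r := r) ⟨i, by simp [Stmt18.genPairs, hir]⟩, _,
          Stmt18.gen_lead hm ⟨i, by simp [Stmt18.genPairs, hir]⟩, (Stmt18.X_mul_X_eq _ _)⟩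
      · refine Ideal.subset_span ⟨monomial (single (v d i 0) 1 + single (v d i 2) 1) 1
          - monomial (single (v d i 1) 2) 1,
          Stmt18.gen_mem (r := r) ⟨i, by simp [Stmt18.genPairs, hir]⟩, _,
          Stmt18.gen_lead hm ⟨i, by simp [Stmt18.genPairs, hir]⟩, (Stmt18.X_mul_X_eq _ _)⟩
      · refine Ideal.subset_span ⟨monomial (single (v d i 1) 3) 1
          - monomial (single (v d i 2) 3) 1,
          Stmt18.gen_mem (r := r) ⟨i, by simp [Stmt18.genPairs, hir]⟩, _,
          Stmt18.gen_lead hm ⟨i, by simp [Stmt18.genPairs, hir]⟩, X_pow_eq_monomial⟩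


/-- with respect to `<_r`, the initial ideal of `I` is generated by
`x_{3i-1}x_{3i}, x_{3i-1}^2, x_{3i}^2` for `1 ≤ i ≤ r` together with
`x_{3i-2}^2, x_{3i-2}x_{3i-1}, x_{3i-2}x_{3i}, x_{3i-1}^3` for `r+1 ≤ i ≤ d`. -/
theorem stmt18 (K : Type*) [Field K] (d : ℕ) (hd : 0 < d) (r : ℕ) (hr : r ≤ d)
    (m : MonomialOrder (Fin (3*d))) (hm : IsWtLexOrder m (wvec d r)) :
    initialIdeal m (bigIdeal K d) =
      Ideal.span (⋃ i : Fin d,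
        if i.val < r then
          ({X (v d i 1) * X (v d i 2), X (v d i 1)^2, X (v d i 2)^2} :
            Set (MvPolynomial (Fin (3*d)) K))
        else
          {X (v d i 0)^2, X (v d i 0) * X (v d i 1), X (v d i 0) * X (v d i 2),
            X (v d i 1)^3}) := by
  exact stmt18' K d hd r hr m hm
end
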